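/- For every integer M ≥ 2, with k = ⌈lg M⌉, the quantity μ_pi(M) = k + 1 - 2^k/M - lg M satisfies 0 ≤ μ_pi(M) ≤ lg(lg e) + 1 - lg e. -/

import Mathlib

open Real

/-- For every integer `M ≥ 2`, with `k = ⌈lg M⌉`, the redundancy
`μ_pi(M) = k + 1 - 2^k / M - lg M` satisfies `0 ≤ μ_pi(M) ≤ lg (lg e) + 1 - lg e`. -/
theorem stmt1 (M : ℕ) (hM : 2 ≤ M) :
    0 ≤ (⌈logb 2 (M:ℝ)⌉₊ : ℝ) + 1 - 2^(⌈logb 2 (M:ℝ)⌉₊) / (M:ℝ) - logb 2 (M:ℝ) ∧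
    (⌈logb 2 (M:ℝ)⌉₊ : ℝ) + 1 - 2^(⌈logb 2 (M:ℝ)⌉₊) / (M:ℝ) - logb 2 (M:ℝ)
      ≤ logb 2 (logb 2 (exp 1)) + 1 - logb 2 (exp 1) := by
  have hM2 : (2:ℝ) ≤ (M:ℝ) := by exact_mod_cast hM
  have hM0 : (0:ℝ) < M := by linarith
  set x := logb 2 (M:ℝ) with hxdef
  have hx1 : 1 ≤ x := by
    have : logb 2 (2:ℝ) ≤ logb 2 (M:ℝ) := by
      gcongr
      norm_num
    simpa using this
  set k := ⌈x⌉₊ with hk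
  have hxk : x ≤ (k:ℝ) := Nat.le_ceil x
  have hkx1 : (k:ℝ) < x + 1 := Nat.ceil_lt_add_one (by linarith)
  have hM_rpow : (M:ℝ) = (2:ℝ) ^ x := (rpow_logb two_pos (by norm_num) hM0).symm
  have hpow : (2:ℝ)^k / (M:ℝ) = (2:ℝ) ^ ((k:ℝ) - x) := by
    rw [rpow_sub two_pos, rpow_natCast, ← hM_rpow]
  rw [hpow]
  set t := (k:ℝ) - x with htdef
  have ht0 : 0 ≤ t := by rw [htdef]; linarith
  have ht1 : t ≤ 1 := by rw [htdef]; linarith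
  have hc : (0:ℝ) < log 2 := log_pos one_lt_two
  have h2t : (2:ℝ) ^ t = exp (log 2 * t) := rpow_def_of_pos two_pos t
  constructor
  · -- lower bound: 2^t ≤ 1 + t on [0,1] by convexity of exp
    have hconv := convexOn_exp.2 (Set.mem_univ (0:ℝ)) (Set.mem_univ (log 2))
      (by linarith : (0:ℝ) ≤ 1 - t) ht0 (by ring)
    simp only [smul_eq_mul, mul_zero, zero_add, exp_zero, mul_one, exp_log two_pos] at hconv
    rw [mul_comm] at hconv
    rw [h2t]
    have heq : (k:ℝ) + 1 - exp (log 2 * t) - x = t + 1 - exp (log 2 * t) := by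
      rw [htdef]; ring
    rw [heq]
    linarith
  · -- upper bound: tangent line at maximizer a = lg lg e
    have hlge : logb 2 (exp 1) = 1 / log 2 := by
      rw [logb, log_exp]
    have ha : logb 2 (logb 2 (exp 1)) = -log (log 2) / log 2 := by
      rw [hlge, logb, log_div one_ne_zero (ne_of_gt hc), log_one]
      ring
    set a := -log (log 2) / log 2 with hadef
    have hexpa : exp (log 2 * a) = 1 / log 2 := by
      have hm : log 2 * a = -log (log 2) := by
        rw [hadef]; field_simp
      rw [hm, exp_neg, exp_log hc, one_div]
    have htangent : 1 / log 2 + (t - a) ≤ (2:ℝ) ^ t := by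
      have h1 : log 2 * (t - a) + 1 ≤ exp (log 2 * (t - a)) := add_one_le_exp _
      have h2 : (2:ℝ) ^ t = exp (log 2 * a) * exp (log 2 * (t - a)) := by
        rw [h2t, ← exp_add]; ring_nf
      rw [h2, hexpa]
      calc 1 / log 2 + (t - a)
          = (1 / log 2) * (log 2 * (t - a) + 1) := by field_simp; ring
        _ ≤ (1 / log 2) * exp (log 2 * (t - a)) :=
            mul_le_mul_of_nonneg_left h1 (by positivity)
    have hgoal : (k:ℝ) + 1 - (2:ℝ)^t - x = t + 1 - (2:ℝ)^t := by rw [htdef]; ring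
    rw [hgoal, ha, hlge]
    linarith
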